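/- Let μ be a probability measure on ℝ^d supported in the closed Euclidean ball B(0,R) for some R > 0. Then for every t > 0 and every z ∈ ℝ^d, (1/t)·(1 − R²/t)·I_d ≼ −∇² log(μ*γ_t)(z) ≼ (1/t)·I_d. In particular, μ*γ_t is log-concave for t ≥ R². -/

import Mathlib

noncomputable section
set_option synthInstance.maxHeartbeats 1000000
set_option maxHeartbeats 1000000
open Real MeasureTheory

/-- Centered Gaussian density on `ℝ^d` with covariance `t • I_d`. -/
def gaussDensity {d : ℕ} (t : ℝ) (x : EuclideanSpace ℝ (Fin d)) : ℝ :=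
  (2 * π * t) ^ (-(d : ℝ) / 2) * Real.exp (-‖x‖ ^ 2 / (2 * t))

/-- The heat flow `μ * γ_t` started from a measure `μ` on `ℝ^d`. -/
def heatConvMeas {d : ℕ} (μ : Measure (EuclideanSpace ℝ (Fin d))) (t : ℝ)
    (z : EuclideanSpace ℝ (Fin d)) : ℝ :=
  ∫ x, gaussDensity t (z - x) ∂μ

section Gauss
variable {d : ℕ} {t : ℝ}

local notation "E'" => EuclideanSpace ℝ (Fin d)

def innerCLM : E' →L[ℝ] (E' →L[ℝ] ℝ) := innerSL ℝ

lemma gauss_pos (ht : 0 < t) (x : E') : 0 < gaussDensity t x := by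
  unfold gaussDensity
  positivity

lemma gauss_le (x : E') (ht : 0 < t) :
    gaussDensity t x ≤ (2 * π * t) ^ (-(d : ℝ) / 2) := by
  unfold gaussDensity
  have h1 : Real.exp (-‖x‖ ^ 2 / (2 * t)) ≤ 1 := by
    rw [Real.exp_le_one_iff]
    have : (0:ℝ) ≤ ‖x‖ ^ 2 := by positivity
    have h2t : (0:ℝ) < 2 * t := by linarith
    apply div_nonpos_of_nonpos_of_nonneg <;> linarith
  calc (2 * π * t) ^ (-(d : ℝ) / 2) * Real.exp (-‖x‖ ^ 2 / (2 * t))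
      ≤ (2 * π * t) ^ (-(d : ℝ) / 2) * 1 := by
        apply mul_le_mul_of_nonneg_left h1 (by positivity)
    _ = (2 * π * t) ^ (-(d : ℝ) / 2) := mul_one _

lemma gauss_cont : Continuous (gaussDensity (d := d) t) := by
  unfold gaussDensity
  fun_prop

/-- first derivative of the gaussian -/
def gg1 (t : ℝ) (y : E') : E' →L[ℝ] ℝ := (-(gaussDensity t y) / t) • (innerSL ℝ y)

/-- second derivative of the gaussian -/
def gg2 (t : ℝ) (y : E') : E' →L[ℝ] (E' →L[ℝ] ℝ) :=
  (-(gaussDensity t y) / t) • innerCLM (d := d)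
    + ((-(1:ℝ)/t) • gg1 t y).smulRight (innerSL ℝ y)

lemma gg1_cont : Continuous (gg1 (d := d) t) := by
  unfold gg1
  exact ((gauss_cont.neg).div_const t).smul (innerCLM (d := d)).continuous

lemma gg2_cont : Continuous (gg2 (d := d) t) := by
  unfold gg2
  have hCA : ContinuousAdd (E' →L[ℝ] (E' →L[ℝ] ℝ)) := by
    have h : IsTopologicalAddGroup (E' →L[ℝ] (E' →L[ℝ] ℝ)) := inferInstance
    exact h.toContinuousAdd
  apply Continuous.fun_add
  · exact ((gauss_cont.neg).div_const t).smul continuous_const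
  · have h1 : Continuous fun y : E' => (-(1:ℝ)/t) • gg1 t y := continuous_const.fun_smul gg1_cont
    have h2 : Continuous fun y : E' => innerSL ℝ y := (innerCLM (d := d)).continuous
    exact (ContinuousLinearMap.smulRightL ℝ E' (E' →L[ℝ] ℝ)).continuous₂.comp (h1.prodMk h2)

lemma hasFDerivAt_gauss (ht : 0 < t) (y : E') :
    HasFDerivAt (gaussDensity t) (gg1 t y) y := by
  have h1 : HasFDerivAt (fun y : E' => ‖y‖ ^ 2) (2 • innerSL ℝ y) y :=
    (hasStrictFDerivAt_norm_sq y).hasFDerivAt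
  have h2 := ((h1.const_mul (-(1/(2*t)))).exp).const_mul ((2 * π * t) ^ (-(d : ℝ) / 2))
  have hfe : gaussDensity (d := d) t
      = fun y => (2 * π * t) ^ (-(d : ℝ) / 2) * Real.exp ((-(1/(2*t))) * ‖y‖ ^ 2) := by
    funext x
    unfold gaussDensity
    congr 1
    ring
  rw [hfe]
  refine h2.congr_fderiv ?_
  ext v
  simp only [gg1, ContinuousLinearMap.smul_apply, two_smul,
    ContinuousLinearMap.add_apply, smul_eq_mul, innerSL_apply_apply]
  rw [hfe]
  field_simp
  ring

lemma hasFDerivAt_gg1 (ht : 0 < t) (y : E') :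
    HasFDerivAt (gg1 t) (gg2 t y) y := by
  have hc : HasFDerivAt (fun y : E' => -(gaussDensity t y) / t) ((-(1:ℝ)/t) • gg1 t y) y := by
    have h := (hasFDerivAt_gauss ht y).const_mul (-(1:ℝ)/t)
    have he : (fun y : E' => (-(1:ℝ)/t) * gaussDensity t y)
        = fun y : E' => -(gaussDensity t y) / t := by
      funext y; ring
    rwa [he] at h
  have hf : HasFDerivAt (fun y : E' => innerSL ℝ y) (innerCLM (d := d)) y :=
    (innerCLM (d := d)).hasFDerivAt
  exact hc.smul hf

lemma norm_gg1_le (ht : 0 < t) (y : E') :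
    ‖gg1 t y‖ ≤ (2 * π * t) ^ (-(d : ℝ) / 2) / t * ‖y‖ := by
  unfold gg1
  rw [norm_smul (-(gaussDensity t y) / t) (innerSL ℝ y), innerSL_apply_norm]
  gcongr
  rw [Real.norm_eq_abs, abs_div, abs_neg, abs_of_pos (gauss_pos ht y), abs_of_pos ht]
  gcongr
  exact gauss_le y ht

lemma norm_gg2_le (ht : 0 < t) (y : E') :
    ‖gg2 t y‖ ≤ (2 * π * t) ^ (-(d : ℝ) / 2) / t
      + (2 * π * t) ^ (-(d : ℝ) / 2) / t ^ 2 * ‖y‖ ^ 2 := by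
  unfold gg2
  apply (ContinuousLinearMap.opNorm_add_le _ _).trans
  have e1 : ‖(-(gaussDensity t y) / t) • innerCLM (d := d)‖ ≤ (2 * π * t) ^ (-(d : ℝ) / 2) / t := by
    apply (ContinuousLinearMap.opNorm_smul_le _ _).trans
    have h2 : ‖innerCLM (d := d)‖ ≤ 1 := norm_innerSL_le ℝ
    have h3 : ‖-(gaussDensity t y) / t‖ = gaussDensity t y / t := by
      rw [Real.norm_eq_abs, abs_div, abs_neg, abs_of_pos (gauss_pos ht y), abs_of_pos ht]
    calc ‖-(gaussDensity t y) / t‖ * ‖innerCLM (d := d)‖ ≤ ‖-(gaussDensity t y) / t‖ * 1 := by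
          gcongr
      _ = gaussDensity t y / t := by rw [mul_one, h3]
      _ ≤ (2 * π * t) ^ (-(d : ℝ) / 2) / t := by gcongr; exact gauss_le y ht
  have e2 : ‖((-(1:ℝ)/t) • gg1 t y).smulRight (innerSL ℝ y)‖
      ≤ (2 * π * t) ^ (-(d : ℝ) / 2) / t ^ 2 * ‖y‖ ^ 2 := by
    rw [ContinuousLinearMap.norm_smulRight_apply, innerSL_apply_norm]
    have h4 : ‖(-(1:ℝ)/t) • gg1 t y‖ ≤ 1/t * ((2 * π * t) ^ (-(d : ℝ) / 2) / t * ‖y‖) := by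
      apply (ContinuousLinearMap.opNorm_smul_le _ _).trans
      have h5 : ‖(-(1:ℝ)/t)‖ = 1/t := by
        rw [Real.norm_eq_abs, abs_div, abs_neg, abs_one, abs_of_pos ht]
      rw [h5]
      have := norm_gg1_le ht y
      have h1t : (0:ℝ) ≤ 1/t := by positivity
      exact mul_le_mul_of_nonneg_left this h1t
    calc ‖(-(1:ℝ)/t) • gg1 t y‖ * ‖y‖
        ≤ (1/t * ((2 * π * t) ^ (-(d : ℝ) / 2) / t * ‖y‖)) * ‖y‖ := by
          exact mul_le_mul_of_nonneg_right h4 (norm_nonneg y)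
      _ = (2 * π * t) ^ (-(d : ℝ) / 2) / t ^ 2 * ‖y‖ ^ 2 := by field_simp
  exact add_le_add e1 e2

end Gauss

section Heat
variable {d : ℕ} {R t : ℝ} {μ : Measure (EuclideanSpace ℝ (Fin d))}

local notation "E'" => EuclideanSpace ℝ (Fin d)

lemma ae_norm_le (hsupp : μ (Metric.closedBall 0 R)ᶜ = 0) :
    ∀ᵐ x ∂μ, ‖x‖ ≤ R := by
  have h : ∀ᵐ x ∂μ, x ∈ Metric.closedBall (0:E') R := by
    rw [MeasureTheory.ae_iff]
    have : {a : E' | ¬a ∈ Metric.closedBall 0 R} = (Metric.closedBall 0 R)ᶜ := rfl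
    rw [this, hsupp]
  filter_upwards [h] with x hx
  simpa [Metric.mem_closedBall, dist_zero_right] using hx

lemma integ_of_bdd [IsFiniteMeasure μ] {W : Type*} [NormedAddCommGroup W] {φ : E' → W} {c : ℝ}
    (hφ : AEStronglyMeasurable φ μ) (h : ∀ᵐ x ∂μ, ‖φ x‖ ≤ c) : Integrable φ μ :=
  (integrable_const c).mono' hφ h

lemma hasFDerivAt_gauss_sub (ht : 0 < t) (x z : E') :
    HasFDerivAt (fun z : E' => gaussDensity t (z - x)) (gg1 t (z - x)) z := by
  have h := (hasFDerivAt_gauss ht (z - x)).comp z ((hasFDerivAt_id z).sub_const x)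
  simp at h
  exact h

lemma hasFDerivAt_gg1_sub (ht : 0 < t) (x z : E') :
    HasFDerivAt (fun z : E' => gg1 t (z - x)) (gg2 t (z - x)) z := by
  have h := (hasFDerivAt_gg1 ht (z - x)).comp z ((hasFDerivAt_id z).sub_const x)
  simp at h
  exact h

lemma norm_sub_le_of_ball {z₀ z x : E'} (hz : z ∈ Metric.ball z₀ 1) (hx : ‖x‖ ≤ R) :
    ‖z - x‖ ≤ ‖z₀‖ + 1 + R := by
  have h1 : ‖z - z₀‖ < 1 := by
    rw [Metric.mem_ball, dist_eq_norm] at hz; exact hz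
  have h2 : ‖z‖ ≤ ‖z₀‖ + 1 := by
    have h3 := norm_add_le (z - z₀) z₀
    rw [sub_add_cancel] at h3
    linarith
  calc ‖z - x‖ ≤ ‖z‖ + ‖x‖ := norm_sub_le _ _
    _ ≤ ‖z₀‖ + 1 + R := by linarith

lemma gauss_cont_sub (z : E') : Continuous (fun x : E' => gaussDensity t (z - x)) :=
  gauss_cont.comp (continuous_const.sub continuous_id)

lemma gauss_integrable [IsFiniteMeasure μ] (ht : 0 < t) (z : E') :
    Integrable (fun x => gaussDensity t (z - x)) μ := by
  apply integ_of_bdd (gauss_cont_sub z).aestronglyMeasurable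
  apply Filter.Eventually.of_forall
  intro x
  rw [Real.norm_eq_abs, abs_of_pos (gauss_pos ht _)]
  exact gauss_le _ ht

lemma heat_hasFDerivAt [IsProbabilityMeasure μ]
    (hsupp : μ (Metric.closedBall 0 R)ᶜ = 0) (ht : 0 < t) (z₀ : E') :
    HasFDerivAt (heatConvMeas μ t) (∫ x, gg1 t (z₀ - x) ∂μ) z₀ := by
  have he : heatConvMeas μ t = fun z => ∫ x, gaussDensity t (z - x) ∂μ := rfl
  rw [he]
  apply hasFDerivAt_integral_of_dominated_of_fderiv_le
    (F := fun z x => gaussDensity t (z - x)) (F' := fun z x => gg1 t (z - x))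
    (bound := fun _ => (2 * π * t) ^ (-(d : ℝ) / 2) / t * (‖z₀‖ + 1 + R)) (Metric.ball_mem_nhds z₀ one_pos)
  · exact Filter.Eventually.of_forall fun z => (gauss_cont_sub z).aestronglyMeasurable
  · exact gauss_integrable ht z₀
  · exact ((gg1_cont.comp (continuous_const.sub continuous_id)).aestronglyMeasurable)
  · filter_upwards [ae_norm_le hsupp] with x hx
    intro z hz
    calc ‖gg1 t (z - x)‖ ≤ (2 * π * t) ^ (-(d : ℝ) / 2) / t * ‖z - x‖ := norm_gg1_le ht _
      _ ≤ (2 * π * t) ^ (-(d : ℝ) / 2) / t * (‖z₀‖ + 1 + R) := by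
          gcongr
          exact norm_sub_le_of_ball hz hx
  · exact integrable_const _
  · exact Filter.Eventually.of_forall fun x z _ => hasFDerivAt_gauss_sub ht x z

lemma heat1_hasFDerivAt [IsProbabilityMeasure μ]
    (hsupp : μ (Metric.closedBall 0 R)ᶜ = 0) (ht : 0 < t) (z₀ : E') :
    HasFDerivAt (fun z => ∫ x, gg1 t (z - x) ∂μ) (∫ x, gg2 t (z₀ - x) ∂μ) z₀ := by
  apply hasFDerivAt_integral_of_dominated_of_fderiv_le
    (F := fun z x => gg1 t (z - x)) (F' := fun z x => gg2 t (z - x))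
    (bound := fun _ => (2 * π * t) ^ (-(d : ℝ) / 2) / t
      + (2 * π * t) ^ (-(d : ℝ) / 2) / t ^ 2 * (‖z₀‖ + 1 + R) ^ 2) (Metric.ball_mem_nhds z₀ one_pos)
  · exact Filter.Eventually.of_forall fun z =>
      ((gg1_cont.comp (continuous_const.sub continuous_id)).aestronglyMeasurable)
  · apply integ_of_bdd ((gg1_cont.comp (continuous_const.sub continuous_id)).aestronglyMeasurable)
      (c := (2 * π * t) ^ (-(d : ℝ) / 2) / t * (‖z₀‖ + R))
    filter_upwards [ae_norm_le hsupp] with x hx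
    calc ‖gg1 t (z₀ - x)‖ ≤ (2 * π * t) ^ (-(d : ℝ) / 2) / t * ‖z₀ - x‖ := norm_gg1_le ht _
      _ ≤ (2 * π * t) ^ (-(d : ℝ) / 2) / t * (‖z₀‖ + R) := by
          gcongr
          exact (norm_sub_le _ _).trans (by linarith)
  · exact ((gg2_cont.comp (continuous_const.sub continuous_id)).aestronglyMeasurable)
  · filter_upwards [ae_norm_le hsupp] with x hx
    intro z hz
    calc ‖gg2 t (z - x)‖
        ≤ (2 * π * t) ^ (-(d : ℝ) / 2) / t
          + (2 * π * t) ^ (-(d : ℝ) / 2) / t ^ 2 * ‖z - x‖ ^ 2 := norm_gg2_le ht _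
      _ ≤ (2 * π * t) ^ (-(d : ℝ) / 2) / t
          + (2 * π * t) ^ (-(d : ℝ) / 2) / t ^ 2 * (‖z₀‖ + 1 + R) ^ 2 := by
          have hb : ‖z - x‖ ^ 2 ≤ (‖z₀‖ + 1 + R) ^ 2 :=
            pow_le_pow_left₀ (norm_nonneg _) (norm_sub_le_of_ball hz hx) 2
          have hB : (0:ℝ) ≤ (2 * π * t) ^ (-(d : ℝ) / 2) / t ^ 2 := by positivity
          nlinarith [mul_le_mul_of_nonneg_left hb hB]
  · exact integrable_const _
  · exact Filter.Eventually.of_forall fun x z _ => hasFDerivAt_gg1_sub ht x z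

lemma heat2_cont [IsProbabilityMeasure μ]
    (hsupp : μ (Metric.closedBall 0 R)ᶜ = 0) (ht : 0 < t) :
    Continuous (fun z => ∫ x, gg2 t (z - x) ∂μ) := by
  rw [continuous_iff_continuousAt]
  intro z₀
  apply continuousAt_of_dominated (bound := fun _ => (2 * π * t) ^ (-(d : ℝ) / 2) / t
      + (2 * π * t) ^ (-(d : ℝ) / 2) / t ^ 2 * (‖z₀‖ + 1 + R) ^ 2)
  · exact Filter.Eventually.of_forall fun z =>
      ((gg2_cont.comp (continuous_const.sub continuous_id)).aestronglyMeasurable)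
  · apply Filter.eventually_of_mem (Metric.ball_mem_nhds z₀ one_pos)
    intro z hz
    filter_upwards [ae_norm_le hsupp] with x hx
    calc ‖gg2 t (z - x)‖
        ≤ (2 * π * t) ^ (-(d : ℝ) / 2) / t
          + (2 * π * t) ^ (-(d : ℝ) / 2) / t ^ 2 * ‖z - x‖ ^ 2 := norm_gg2_le ht _
      _ ≤ (2 * π * t) ^ (-(d : ℝ) / 2) / t
          + (2 * π * t) ^ (-(d : ℝ) / 2) / t ^ 2 * (‖z₀‖ + 1 + R) ^ 2 := by
          have hb : ‖z - x‖ ^ 2 ≤ (‖z₀‖ + 1 + R) ^ 2 :=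
            pow_le_pow_left₀ (norm_nonneg _) (norm_sub_le_of_ball hz hx) 2
          have hB : (0:ℝ) ≤ (2 * π * t) ^ (-(d : ℝ) / 2) / t ^ 2 := by positivity
          nlinarith [mul_le_mul_of_nonneg_left hb hB]
  · exact integrable_const _
  · exact Filter.Eventually.of_forall fun x =>
      ((gg2_cont.comp (continuous_id.sub continuous_const)).continuousAt)

lemma heat_contDiff2 [IsProbabilityMeasure μ]
    (hsupp : μ (Metric.closedBall 0 R)ᶜ = 0) (ht : 0 < t) :
    ContDiff ℝ 2 (heatConvMeas μ t) := by
  have h2 : (2 : WithTop ℕ∞) = 1 + 1 := by norm_num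
  rw [h2, contDiff_succ_iff_fderiv]
  refine ⟨fun z => (heat_hasFDerivAt hsupp ht z).differentiableAt, by simp, ?_⟩
  have hfd : fderiv ℝ (heatConvMeas μ t) = fun z => ∫ x, gg1 t (z - x) ∂μ :=
    funext fun z => (heat_hasFDerivAt hsupp ht z).fderiv
  rw [hfd, contDiff_one_iff_fderiv]
  refine ⟨fun z => (heat1_hasFDerivAt hsupp ht z).differentiableAt, ?_⟩
  have hfd1 : fderiv ℝ (fun z => ∫ x, gg1 t (z - x) ∂μ) = fun z => ∫ x, gg2 t (z - x) ∂μ :=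
    funext fun z => (heat1_hasFDerivAt hsupp ht z).fderiv
  rw [hfd1]
  exact heat2_cont hsupp ht

lemma heat_pos [IsProbabilityMeasure μ] (hR : 0 ≤ R)
    (hsupp : μ (Metric.closedBall 0 R)ᶜ = 0) (ht : 0 < t) (z : E') :
    0 < heatConvMeas μ t z := by
  set c₀ := (2 * π * t) ^ (-(d : ℝ) / 2) * Real.exp (-(‖z‖ + R) ^ 2 / (2 * t)) with hc₀
  have hc₀pos : 0 < c₀ := by positivity
  have hlow : ∀ᵐ x ∂μ, c₀ ≤ gaussDensity t (z - x) := by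
    filter_upwards [ae_norm_le hsupp] with x hx
    unfold gaussDensity
    rw [hc₀]
    gcongr (2 * π * t) ^ (-(d : ℝ) / 2) * Real.exp ?_
    have h1 : ‖z - x‖ ≤ ‖z‖ + R := (norm_sub_le _ _).trans (by linarith)
    have h2 : ‖z - x‖ ^ 2 ≤ (‖z‖ + R) ^ 2 := by
      apply pow_le_pow_left₀ (norm_nonneg _) h1 2
    rw [div_le_div_iff₀ (by positivity) (by positivity)]
    nlinarith
  have hint := gauss_integrable (μ := μ) ht z
  have h := integral_mono_ae (integrable_const c₀) hint hlow
  rw [integral_const, probReal_univ, one_smul] at h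
  exact lt_of_lt_of_le hc₀pos h

end Heat

section Line
variable {d : ℕ}
local notation "E'" => EuclideanSpace ℝ (Fin d)

lemma hasDerivAt_line {g : E' → ℝ} (hg : Differentiable ℝ g) (z w : E') (s : ℝ) :
    HasDerivAt (fun s : ℝ => g (z + s • w)) (fderiv ℝ g (z + s • w) w) s := by
  have hL : HasDerivAt (fun s : ℝ => z + s • w) w s := by
    simpa using ((hasDerivAt_id s).smul_const w).const_add z
  exact ((hg (z + s • w)).hasFDerivAt).comp_hasDerivAt s hL

lemma fderiv_diff_of_contDiff2 {g : E' → ℝ} (hg : ContDiff ℝ 2 g) :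
    Differentiable ℝ (fderiv ℝ g) := by
  have h2 : (2 : WithTop ℕ∞) = 1 + 1 := by norm_num
  rw [h2, contDiff_succ_iff_fderiv] at hg
  exact hg.2.2.differentiable one_ne_zero

lemma hasDerivAt_line2 {g : E' → ℝ} (hg : ContDiff ℝ 2 g) (z w : E') (s : ℝ) :
    HasDerivAt (fun s : ℝ => fderiv ℝ g (z + s • w) w)
      (iteratedFDeriv ℝ 2 g (z + s • w) ![w, w]) s := by
  have hL : HasDerivAt (fun s : ℝ => z + s • w) w s := by
    simpa using ((hasDerivAt_id s).smul_const w).const_add z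
  have h1 : HasDerivAt (fun s : ℝ => fderiv ℝ g (z + s • w))
      (fderiv ℝ (fderiv ℝ g) (z + s • w) w) s :=
    ((fderiv_diff_of_contDiff2 hg (z + s • w)).hasFDerivAt).comp_hasDerivAt s hL
  have h2 := h1.clm_apply (hasDerivAt_const s w)
  rw [iteratedFDeriv_two_apply]
  simpa using h2

end Line

section OneDim
variable {d : ℕ} {R t : ℝ} {μ : Measure (EuclideanSpace ℝ (Fin d))}
local notation "E'" => EuclideanSpace ℝ (Fin d)

def ka (t : ℝ) (z x : E') : ℝ := ‖z - x‖ ^ 2 / (2 * t)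

def kb (t : ℝ) (z w x : E') : ℝ := (inner ℝ (z - x) w : ℝ) / t

def ke (t : ℝ) (z w : E') (s : ℝ) (x : E') : ℝ := Real.exp (-(ka t z x) - s * kb t z w x)

def kψ (μ : Measure (EuclideanSpace ℝ (Fin d))) (t : ℝ) (z w : E') (s : ℝ) : ℝ :=
  ∫ x, ke t z w s x ∂μ

def kψ₁ (μ : Measure (EuclideanSpace ℝ (Fin d))) (t : ℝ) (z w : E') (s : ℝ) : ℝ :=
  ∫ x, -(kb t z w x) * ke t z w s x ∂μ

def kψ₂ (μ : Measure (EuclideanSpace ℝ (Fin d))) (t : ℝ) (z w : E') (s : ℝ) : ℝ :=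
  ∫ x, (kb t z w x) ^ 2 * ke t z w s x ∂μ

lemma kb_cont (z w : E') : Continuous (kb t z w) := by
  unfold kb
  exact ((continuous_const.sub continuous_id).inner continuous_const).div_const t

lemma ka_cont (z : E') : Continuous (ka t z) := by
  unfold ka
  exact (((continuous_const.sub continuous_id).norm).pow 2).div_const (2 * t)

lemma ke_cont (z w : E') (s : ℝ) : Continuous (ke t z w s) := by
  unfold ke
  exact Real.continuous_exp.comp ((ka_cont z).neg.sub (continuous_const.mul (kb_cont z w)))

lemma ke_pos (z w : E') (s : ℝ) (x : E') : 0 < ke t z w s x := Real.exp_pos _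

lemma kb_abs_le (hsupp : μ (Metric.closedBall 0 R)ᶜ = 0) (ht : 0 < t) (z w : E') :
    ∀ᵐ x ∂μ, |kb t z w x| ≤ (‖z‖ + R) * ‖w‖ / t := by
  filter_upwards [ae_norm_le hsupp] with x hx
  unfold kb
  rw [abs_div, abs_of_pos ht]
  gcongr
  calc |(inner ℝ (z - x) w : ℝ)| ≤ ‖z - x‖ * ‖w‖ := abs_real_inner_le_norm _ _
    _ ≤ (‖z‖ + R) * ‖w‖ := by
        have : ‖z - x‖ ≤ ‖z‖ + R := (norm_sub_le _ _).trans (by linarith)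
        exact mul_le_mul_of_nonneg_right this (norm_nonneg w)

lemma ke_le {K : ℝ} (ht : 0 < t) (z w : E') {x : E'} (hb : |kb t z w x| ≤ K) (s : ℝ) :
    ke t z w s x ≤ Real.exp (|s| * K) := by
  unfold ke
  apply Real.exp_le_exp.2
  have h1 : 0 ≤ ka t z x := by
    unfold ka
    apply div_nonneg (by positivity) (by linarith)
  have h2 : -(s * kb t z w x) ≤ |s| * K := by
    calc -(s * kb t z w x) ≤ |s * kb t z w x| := neg_le_abs _
      _ = |s| * |kb t z w x| := abs_mul _ _
      _ ≤ |s| * K := mul_le_mul_of_nonneg_left hb (abs_nonneg s)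
  linarith

lemma ke_integrable [IsProbabilityMeasure μ]
    (hsupp : μ (Metric.closedBall 0 R)ᶜ = 0) (ht : 0 < t) (z w : E') (s : ℝ) :
    Integrable (ke t z w s) μ := by
  apply integ_of_bdd (ke_cont z w s).aestronglyMeasurable
    (c := Real.exp (|s| * ((‖z‖ + R) * ‖w‖ / t)))
  filter_upwards [kb_abs_le hsupp ht z w] with x hx
  rw [Real.norm_eq_abs, abs_of_pos (ke_pos z w s x)]
  exact ke_le ht z w hx s

lemma kbe_integrable [IsProbabilityMeasure μ]
    (hsupp : μ (Metric.closedBall 0 R)ᶜ = 0) (ht : 0 < t) (z w : E') (s : ℝ) :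
    Integrable (fun x => -(kb t z w x) * ke t z w s x) μ := by
  set K := (‖z‖ + R) * ‖w‖ / t with hK
  apply integ_of_bdd (((kb_cont z w).neg.mul (ke_cont z w s)).aestronglyMeasurable)
    (c := K * Real.exp (|s| * K))
  filter_upwards [kb_abs_le hsupp ht z w] with x hx
  rw [Real.norm_eq_abs, Pi.mul_apply, Pi.neg_apply, abs_mul, abs_neg]
  have h1 := ke_le ht z w hx s
  have h2 : |ke t z w s x| = ke t z w s x := abs_of_pos (ke_pos z w s x)
  rw [h2]
  have hK0 : 0 ≤ K := le_trans (abs_nonneg _) hx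
  exact mul_le_mul hx h1 (ke_pos z w s x).le hK0

lemma kb2e_integrable [IsProbabilityMeasure μ]
    (hsupp : μ (Metric.closedBall 0 R)ᶜ = 0) (ht : 0 < t) (z w : E') (s : ℝ) :
    Integrable (fun x => (kb t z w x) ^ 2 * ke t z w s x) μ := by
  set K := (‖z‖ + R) * ‖w‖ / t with hK
  apply integ_of_bdd ((((kb_cont z w).pow 2).mul (ke_cont z w s)).aestronglyMeasurable)
    (c := K ^ 2 * Real.exp (|s| * K))
  filter_upwards [kb_abs_le hsupp ht z w] with x hx
  rw [Real.norm_eq_abs, Pi.mul_apply, Pi.pow_apply, abs_mul]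
  have h1 := ke_le ht z w hx s
  have h2 : |ke t z w s x| = ke t z w s x := abs_of_pos (ke_pos z w s x)
  rw [h2]
  have hK0 : 0 ≤ K := le_trans (abs_nonneg _) hx
  have h3 : |kb t z w x ^ 2| ≤ K ^ 2 := by
    rw [abs_pow]
    exact pow_le_pow_left₀ (abs_nonneg _) hx 2
  exact mul_le_mul h3 h1 (ke_pos z w s x).le (by positivity)

lemma ke_hasDerivAt (z w : E') (x : E') (s : ℝ) :
    HasDerivAt (fun s => ke t z w s x) (-(kb t z w x) * ke t z w s x) s := by
  have h : HasDerivAt (fun s : ℝ => -(ka t z x) - s * kb t z w x) (-(kb t z w x)) s := by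
    simpa [sub_eq_add_neg] using ((hasDerivAt_mul_const (kb t z w x)).neg).const_add (-(ka t z x))
  have h2 := h.exp
  unfold ke
  convert h2 using 1
  ring

lemma kbe_hasDerivAt (z w : E') (x : E') (s : ℝ) :
    HasDerivAt (fun s => -(kb t z w x) * ke t z w s x) ((kb t z w x) ^ 2 * ke t z w s x) s := by
  have h := (ke_hasDerivAt (t := t) z w x s).const_mul (-(kb t z w x))
  refine h.congr_deriv ?_
  ring


lemma abs_le_of_ball {s₀ s : ℝ} (hs : s ∈ Metric.ball s₀ 1) : |s| ≤ |s₀| + 1 := by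
  rw [Metric.mem_ball, Real.dist_eq] at hs
  calc |s| = |s₀ + (s - s₀)| := by ring_nf
    _ ≤ |s₀| + |s - s₀| := abs_add_le _ _
    _ ≤ |s₀| + 1 := by linarith

lemma kψ_hasDerivAt [IsProbabilityMeasure μ]
    (hsupp : μ (Metric.closedBall 0 R)ᶜ = 0) (ht : 0 < t) (z w : E') (s₀ : ℝ) :
    HasDerivAt (kψ μ t z w) (kψ₁ μ t z w s₀) s₀ := by
  set K := (‖z‖ + R) * ‖w‖ / t with hK
  have h := hasDerivAt_integral_of_dominated_loc_of_deriv_le (μ := μ)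
    (F := fun s x => ke t z w s x) (F' := fun s x => -(kb t z w x) * ke t z w s x)
    (x₀ := s₀) (bound := fun _ => K * Real.exp ((|s₀| + 1) * K)) (Metric.ball_mem_nhds s₀ one_pos)
    (Filter.Eventually.of_forall fun s => (ke_cont z w s).aestronglyMeasurable)
    (ke_integrable hsupp ht z w s₀)
    (((kb_cont z w).neg.mul (ke_cont z w s₀)).aestronglyMeasurable)
    ?_ (integrable_const _)
    (Filter.Eventually.of_forall fun x s _ => ke_hasDerivAt z w x s)
  · exact h.2
  · filter_upwards [kb_abs_le hsupp ht z w] with x hx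
    intro s hs
    have hK0 : 0 ≤ K := le_trans (abs_nonneg _) hx
    have h1 : ke t z w s x ≤ Real.exp (|s| * K) := ke_le ht z w hx s
    have h2 : Real.exp (|s| * K) ≤ Real.exp ((|s₀| + 1) * K) := by
      apply Real.exp_le_exp.2
      exact mul_le_mul_of_nonneg_right (abs_le_of_ball hs) hK0
    rw [Real.norm_eq_abs, abs_mul, abs_neg, abs_of_pos (ke_pos z w s x)]
    exact mul_le_mul hx (h1.trans h2) (ke_pos z w s x).le hK0

lemma kψ₁_hasDerivAt [IsProbabilityMeasure μ]
    (hsupp : μ (Metric.closedBall 0 R)ᶜ = 0) (ht : 0 < t) (z w : E') (s₀ : ℝ) :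
    HasDerivAt (kψ₁ μ t z w) (kψ₂ μ t z w s₀) s₀ := by
  set K := (‖z‖ + R) * ‖w‖ / t with hK
  have h := hasDerivAt_integral_of_dominated_loc_of_deriv_le (μ := μ)
    (F := fun s x => -(kb t z w x) * ke t z w s x)
    (F' := fun s x => (kb t z w x) ^ 2 * ke t z w s x)
    (x₀ := s₀) (bound := fun _ => K ^ 2 * Real.exp ((|s₀| + 1) * K)) (Metric.ball_mem_nhds s₀ one_pos)
    (Filter.Eventually.of_forall fun s => ((kb_cont z w).neg.mul (ke_cont z w s)).aestronglyMeasurable)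
    (kbe_integrable hsupp ht z w s₀)
    ((((kb_cont z w).pow 2).mul (ke_cont z w s₀)).aestronglyMeasurable)
    ?_ (integrable_const _)
    (Filter.Eventually.of_forall fun x s _ => kbe_hasDerivAt z w x s)
  · exact h.2
  · filter_upwards [kb_abs_le hsupp ht z w] with x hx
    intro s hs
    have hK0 : 0 ≤ K := le_trans (abs_nonneg _) hx
    have h1 : ke t z w s x ≤ Real.exp (|s| * K) := ke_le ht z w hx s
    have h2 : Real.exp (|s| * K) ≤ Real.exp ((|s₀| + 1) * K) := by
      apply Real.exp_le_exp.2
      exact mul_le_mul_of_nonneg_right (abs_le_of_ball hs) hK0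
    rw [Real.norm_eq_abs, abs_mul, abs_pow, abs_of_pos (ke_pos z w s x)]
    apply mul_le_mul (pow_le_pow_left₀ (abs_nonneg _) hx 2) (h1.trans h2)
      (ke_pos z w s x).le (by positivity)

lemma kψ_pos [IsProbabilityMeasure μ] (hR : 0 ≤ R)
    (hsupp : μ (Metric.closedBall 0 R)ᶜ = 0) (ht : 0 < t) (z w : E') (s : ℝ) :
    0 < kψ μ t z w s := by
  set K := (‖z‖ + R) * ‖w‖ / t with hKdef
  set c₀ := Real.exp (-((‖z‖ + R) ^ 2 / (2 * t)) - |s| * K) with hc₀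
  have hc₀pos : 0 < c₀ := Real.exp_pos _
  have hlow : ∀ᵐ x ∂μ, c₀ ≤ ke t z w s x := by
    filter_upwards [ae_norm_le hsupp, kb_abs_le hsupp ht z w] with x hx hbx
    unfold ke
    apply Real.exp_le_exp.2
    have h1 : ka t z x ≤ (‖z‖ + R) ^ 2 / (2 * t) := by
      unfold ka
      have h2 : ‖z - x‖ ≤ ‖z‖ + R := (norm_sub_le _ _).trans (by linarith)
      have h3 : ‖z - x‖ ^ 2 ≤ (‖z‖ + R) ^ 2 := pow_le_pow_left₀ (norm_nonneg _) h2 2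
      apply div_le_div_of_nonneg_right h3 (by linarith) |>.trans_eq rfl
    have h4 : s * kb t z w x ≤ |s| * K := by
      calc s * kb t z w x ≤ |s * kb t z w x| := le_abs_self _
        _ = |s| * |kb t z w x| := abs_mul _ _
        _ ≤ |s| * K := mul_le_mul_of_nonneg_left hbx (abs_nonneg s)
    linarith
  have hint := ke_integrable hsupp ht z w s
  have h := integral_mono_ae (integrable_const c₀) hint hlow
  rw [integral_const, probReal_univ, one_smul] at h
  exact lt_of_lt_of_le hc₀pos h

lemma heat_factor [IsProbabilityMeasure μ] (ht : 0 < t) (z w : E') (s : ℝ) :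
    heatConvMeas μ t (z + s • w)
      = (2 * π * t) ^ (-(d : ℝ) / 2)
        * (Real.exp (-(s ^ 2 * ‖w‖ ^ 2) / (2 * t)) * kψ μ t z w s) := by
  have hpt : ∀ x : E', gaussDensity t (z + s • w - x)
      = (2 * π * t) ^ (-(d : ℝ) / 2)
        * (Real.exp (-(s ^ 2 * ‖w‖ ^ 2) / (2 * t)) * ke t z w s x) := by
    intro x
    unfold gaussDensity ke ka kb
    rw [show z + s • w - x = (z - x) + s • w from add_sub_right_comm z (s • w) x]
    rw [norm_add_sq_real, real_inner_smul_right, norm_smul, mul_pow, Real.norm_eq_abs, sq_abs]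
    rw [← Real.exp_add]
    congr 2
    field_simp
    ring
  calc heatConvMeas μ t (z + s • w) = ∫ x, gaussDensity t (z + s • w - x) ∂μ := rfl
    _ = ∫ x, (2 * π * t) ^ (-(d : ℝ) / 2)
          * (Real.exp (-(s ^ 2 * ‖w‖ ^ 2) / (2 * t)) * ke t z w s x) ∂μ := by
        congr 1
        funext x
        exact hpt x
    _ = (2 * π * t) ^ (-(d : ℝ) / 2)
          * (Real.exp (-(s ^ 2 * ‖w‖ ^ 2) / (2 * t)) * kψ μ t z w s) := by
        rw [integral_const_mul, integral_const_mul]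
        rfl

end OneDim

section KeyLemma
variable {d : ℕ} {R t : ℝ} {μ : Measure (EuclideanSpace ℝ (Fin d))}
local notation "E'" => EuclideanSpace ℝ (Fin d)

lemma key_expand [IsProbabilityMeasure μ]
    (hsupp : μ (Metric.closedBall 0 R)ᶜ = 0) (ht : 0 < t) (z w : E') (m : ℝ) :
    ∫ x, (kb t z w x - m) ^ 2 * ke t z w 0 x ∂μ
      = kψ₂ μ t z w 0 + 2 * m * kψ₁ μ t z w 0 + m ^ 2 * kψ μ t z w 0 := by
  have hpt : (fun x => (kb t z w x - m) ^ 2 * ke t z w 0 x)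
      = fun x => ((kb t z w x) ^ 2 * ke t z w 0 x
          + 2 * m * (-(kb t z w x) * ke t z w 0 x)) + m ^ 2 * ke t z w 0 x := by
    funext x; ring
  rw [hpt]
  have h1 : Integrable (fun x => (kb t z w x) ^ 2 * ke t z w 0 x
      + 2 * m * (-(kb t z w x) * ke t z w 0 x)) μ :=
    (kb2e_integrable hsupp ht z w 0).add
      ((kbe_integrable hsupp ht z w 0).const_mul (2 * m))
  have h2 : Integrable (fun x => m ^ 2 * ke t z w 0 x) μ :=
    (ke_integrable hsupp ht z w 0).const_mul (m ^ 2)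
  rw [integral_add h1 h2]
  have h3 : Integrable (fun x => (kb t z w x) ^ 2 * ke t z w 0 x) μ :=
    kb2e_integrable hsupp ht z w 0
  have h4 : Integrable (fun x => 2 * m * (-(kb t z w x) * ke t z w 0 x)) μ :=
    (kbe_integrable hsupp ht z w 0).const_mul (2 * m)
  rw [integral_add h3 h4]
  rw [integral_const_mul, integral_const_mul]
  rfl

lemma key [IsProbabilityMeasure μ] (hR : 0 < R)
    (hsupp : μ (Metric.closedBall 0 R)ᶜ = 0) (ht : 0 < t) (z w : E') :
    1 / t * (1 - R ^ 2 / t) * ‖w‖ ^ 2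
        ≤ -(iteratedFDeriv ℝ 2 (fun y => Real.log (heatConvMeas μ t y)) z ![w, w])
      ∧ -(iteratedFDeriv ℝ 2 (fun y => Real.log (heatConvMeas μ t y)) z ![w, w])
        ≤ 1 / t * ‖w‖ ^ 2 := by
  have hFpos : ∀ y, 0 < heatConvMeas μ t y := heat_pos hR.le hsupp ht
  have hF2 : ContDiff ℝ 2 (heatConvMeas μ t) := heat_contDiff2 hsupp ht
  have hg : ContDiff ℝ 2 (fun y => Real.log (heatConvMeas μ t y)) :=
    hF2.log fun y => (hFpos y).ne'
  have hCC : (0:ℝ) < (2 * π * t) ^ (-(d : ℝ) / 2) := by positivity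
  have hψpos : ∀ s, 0 < kψ μ t z w s := kψ_pos hR.le hsupp ht z w
  have hfun : (fun s : ℝ => Real.log (heatConvMeas μ t (z + s • w)))
      = fun s : ℝ => Real.log ((2 * π * t) ^ (-(d : ℝ) / 2))
          + (-(s ^ 2 * ‖w‖ ^ 2) / (2 * t) + Real.log (kψ μ t z w s)) := by
    funext s
    rw [heat_factor ht z w s,
      Real.log_mul hCC.ne' (mul_ne_zero (Real.exp_ne_zero _) (hψpos s).ne'),
      Real.log_mul (Real.exp_ne_zero _) (hψpos s).ne', Real.log_exp]
  have hq : ∀ s : ℝ, HasDerivAt (fun s : ℝ => -(s ^ 2 * ‖w‖ ^ 2) / (2 * t))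
      (-s * ‖w‖ ^ 2 / t) s := by
    intro s
    have h := (((hasDerivAt_pow 2 s).mul_const (‖w‖ ^ 2)).neg).div_const (2 * t)
    refine h.congr_deriv ?_
    field_simp
    ring
  have hB : ∀ s : ℝ, HasDerivAt (fun s : ℝ => Real.log (heatConvMeas μ t (z + s • w)))
      (-s * ‖w‖ ^ 2 / t + kψ₁ μ t z w s / kψ μ t z w s) s := by
    intro s
    rw [hfun]
    have h2 : HasDerivAt (fun s => Real.log (kψ μ t z w s)) (kψ₁ μ t z w s / kψ μ t z w s) s :=
      (kψ_hasDerivAt hsupp ht z w s).log (hψpos s).ne'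
    exact ((hq s).add h2).const_add _
  have hA : ∀ s : ℝ, HasDerivAt (fun s : ℝ => Real.log (heatConvMeas μ t (z + s • w)))
      (fderiv ℝ (fun y => Real.log (heatConvMeas μ t y)) (z + s • w) w) s :=
    fun s => hasDerivAt_line (hg.differentiable (by norm_num)) z w s
  have h' : ∀ s : ℝ, fderiv ℝ (fun y => Real.log (heatConvMeas μ t y)) (z + s • w) w
      = -s * ‖w‖ ^ 2 / t + kψ₁ μ t z w s / kψ μ t z w s :=
    fun s => (hA s).unique (hB s)
  have hA2 : HasDerivAt
      (fun s : ℝ => fderiv ℝ (fun y => Real.log (heatConvMeas μ t y)) (z + s • w) w)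
      (iteratedFDeriv ℝ 2 (fun y => Real.log (heatConvMeas μ t y)) z ![w, w]) 0 := by
    have h := hasDerivAt_line2 hg z w 0
    rw [show z + (0:ℝ) • w = z by simp] at h
    exact h
  have hB2 : HasDerivAt (fun s : ℝ => -s * ‖w‖ ^ 2 / t + kψ₁ μ t z w s / kψ μ t z w s)
      (-‖w‖ ^ 2 / t + (kψ₂ μ t z w 0 * kψ μ t z w 0 - kψ₁ μ t z w 0 * kψ₁ μ t z w 0)
        / kψ μ t z w 0 ^ 2) 0 := by
    have h1 : HasDerivAt (fun s : ℝ => -s * ‖w‖ ^ 2 / t) (-‖w‖ ^ 2 / t) 0 := by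
      have h := ((hasDerivAt_id (0:ℝ)).mul_const (‖w‖ ^ 2)).neg.div_const t
      have he : (fun s : ℝ => -s * ‖w‖ ^ 2 / t) = fun s : ℝ => -(s * ‖w‖ ^ 2) / t := by
        funext s; ring
      rw [he]
      refine h.congr_deriv ?_
      norm_num
    have h2 := (kψ₁_hasDerivAt hsupp ht z w 0).div (kψ_hasDerivAt hsupp ht z w 0) (hψpos 0).ne'
    exact h1.add h2
  have hval : iteratedFDeriv ℝ 2 (fun y => Real.log (heatConvMeas μ t y)) z ![w, w]
      = -‖w‖ ^ 2 / t + (kψ₂ μ t z w 0 * kψ μ t z w 0 - kψ₁ μ t z w 0 * kψ₁ μ t z w 0)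
        / kψ μ t z w 0 ^ 2 := by
    have he : (fun s : ℝ => fderiv ℝ (fun y => Real.log (heatConvMeas μ t y)) (z + s • w) w)
        = fun s : ℝ => -s * ‖w‖ ^ 2 / t + kψ₁ μ t z w s / kψ μ t z w s := funext h'
    have h := hA2
    rw [he] at h
    exact h.unique hB2
  -- variance bounds
  have hI0pos : 0 < kψ μ t z w 0 := hψpos 0
  have hq1 : ∀ m : ℝ, 0 ≤ kψ₂ μ t z w 0 + 2 * m * kψ₁ μ t z w 0 + m ^ 2 * kψ μ t z w 0 := by
    intro m
    rw [← key_expand hsupp ht z w m]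
    apply integral_nonneg
    intro x
    exact mul_nonneg (sq_nonneg _) (ke_pos z w 0 x).le
  have hq3 : 0 ≤ kψ μ t z w 0 * kψ₂ μ t z w 0 - kψ₁ μ t z w 0 ^ 2 := by
    have h := hq1 (-(kψ₁ μ t z w 0) / kψ μ t z w 0)
    have h2 := mul_nonneg h hI0pos.le
    have heq : (kψ₂ μ t z w 0 + 2 * (-(kψ₁ μ t z w 0) / kψ μ t z w 0) * kψ₁ μ t z w 0
        + (-(kψ₁ μ t z w 0) / kψ μ t z w 0) ^ 2 * kψ μ t z w 0) * kψ μ t z w 0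
        = kψ μ t z w 0 * kψ₂ μ t z w 0 - kψ₁ μ t z w 0 ^ 2 := by
      field_simp
      ring
    rwa [heq] at h2
  have hbc : ∀ᵐ x ∂μ, |kb t z w x - (inner ℝ z w : ℝ) / t| ≤ R * ‖w‖ / t := by
    filter_upwards [ae_norm_le hsupp] with x hx
    have he : kb t z w x - (inner ℝ z w : ℝ) / t = (-(inner ℝ x w : ℝ)) / t := by
      unfold kb
      rw [inner_sub_left]
      ring
    rw [he, abs_div, abs_of_pos ht, abs_neg]
    gcongr
    calc |(inner ℝ x w : ℝ)| ≤ ‖x‖ * ‖w‖ := abs_real_inner_le_norm _ _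
      _ ≤ R * ‖w‖ := mul_le_mul_of_nonneg_right hx (norm_nonneg w)
  have hq2 : kψ₂ μ t z w 0 + 2 * ((inner ℝ z w : ℝ) / t) * kψ₁ μ t z w 0
      + ((inner ℝ z w : ℝ) / t) ^ 2 * kψ μ t z w 0 ≤ (R * ‖w‖ / t) ^ 2 * kψ μ t z w 0 := by
    rw [← key_expand hsupp ht z w ((inner ℝ z w : ℝ) / t)]
    have hint2 : Integrable (fun x => (kb t z w x - (inner ℝ z w : ℝ) / t) ^ 2 * ke t z w 0 x) μ := by
      have hpt : (fun x => (kb t z w x - (inner ℝ z w : ℝ) / t) ^ 2 * ke t z w 0 x)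
          = fun x => ((kb t z w x) ^ 2 * ke t z w 0 x
              + 2 * ((inner ℝ z w : ℝ) / t) * (-(kb t z w x) * ke t z w 0 x))
              + ((inner ℝ z w : ℝ) / t) ^ 2 * ke t z w 0 x := by
        funext x; ring
      rw [hpt]
      exact ((kb2e_integrable hsupp ht z w 0).add
        ((kbe_integrable hsupp ht z w 0).const_mul _)).add
        ((ke_integrable hsupp ht z w 0).const_mul _)
    have hint3 : Integrable (fun x => (R * ‖w‖ / t) ^ 2 * ke t z w 0 x) μ :=
      (ke_integrable hsupp ht z w 0).const_mul _
    have hmono : ∀ᵐ x ∂μ, (kb t z w x - (inner ℝ z w : ℝ) / t) ^ 2 * ke t z w 0 x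
        ≤ (R * ‖w‖ / t) ^ 2 * ke t z w 0 x := by
      filter_upwards [hbc] with x hx
      apply mul_le_mul_of_nonneg_right ?_ (ke_pos z w 0 x).le
      have h5 := abs_le.1 hx
      apply sq_le_sq' (by linarith [h5.1]) h5.2
    calc ∫ x, (kb t z w x - (inner ℝ z w : ℝ) / t) ^ 2 * ke t z w 0 x ∂μ
        ≤ ∫ x, (R * ‖w‖ / t) ^ 2 * ke t z w 0 x ∂μ := integral_mono_ae hint2 hint3 hmono
      _ = (R * ‖w‖ / t) ^ 2 * kψ μ t z w 0 := by rw [integral_const_mul]; rfl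
  have hq4 : kψ μ t z w 0 * kψ₂ μ t z w 0 - kψ₁ μ t z w 0 ^ 2
      ≤ (R * ‖w‖ / t) ^ 2 * kψ μ t z w 0 ^ 2 := by
    nlinarith [mul_le_mul_of_nonneg_left hq2 hI0pos.le,
      sq_nonneg (kψ₁ μ t z w 0 + ((inner ℝ z w : ℝ) / t) * kψ μ t z w 0)]
  constructor
  · rw [hval]
    have hDle : (kψ₂ μ t z w 0 * kψ μ t z w 0 - kψ₁ μ t z w 0 * kψ₁ μ t z w 0)
        / kψ μ t z w 0 ^ 2 ≤ R ^ 2 * ‖w‖ ^ 2 / t ^ 2 := by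
      rw [div_le_iff₀ (by positivity)]
      have h6 : (R * ‖w‖ / t) ^ 2 = R ^ 2 * ‖w‖ ^ 2 / t ^ 2 := by ring
      nlinarith [hq4]
    have he2 : -(-‖w‖ ^ 2 / t + (kψ₂ μ t z w 0 * kψ μ t z w 0
        - kψ₁ μ t z w 0 * kψ₁ μ t z w 0) / kψ μ t z w 0 ^ 2)
        = ‖w‖ ^ 2 / t - (kψ₂ μ t z w 0 * kψ μ t z w 0
        - kψ₁ μ t z w 0 * kψ₁ μ t z w 0) / kψ μ t z w 0 ^ 2 := by ring
    rw [he2]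
    have he3 : 1 / t * (1 - R ^ 2 / t) * ‖w‖ ^ 2 = ‖w‖ ^ 2 / t - R ^ 2 * ‖w‖ ^ 2 / t ^ 2 := by
      field_simp
    rw [he3]
    linarith
  · rw [hval]
    have hDge : 0 ≤ (kψ₂ μ t z w 0 * kψ μ t z w 0 - kψ₁ μ t z w 0 * kψ₁ μ t z w 0)
        / kψ μ t z w 0 ^ 2 := by
      apply div_nonneg ?_ (sq_nonneg _)
      nlinarith [hq3]
    have he2 : -(-‖w‖ ^ 2 / t + (kψ₂ μ t z w 0 * kψ μ t z w 0
        - kψ₁ μ t z w 0 * kψ₁ μ t z w 0) / kψ μ t z w 0 ^ 2)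
        = ‖w‖ ^ 2 / t - (kψ₂ μ t z w 0 * kψ μ t z w 0
        - kψ₁ μ t z w 0 * kψ₁ μ t z w 0) / kψ μ t z w 0 ^ 2 := by ring
    rw [he2]
    have he3 : 1 / t * ‖w‖ ^ 2 = ‖w‖ ^ 2 / t := by ring
    rw [he3]
    linarith

end KeyLemma


/-- **Classical log-Hessian bound for compactly supported measures (equation (2)).**
If `μ` is supported in `B(0,R)`, then for all `t > 0` and `z`,
`(1/t)(1 - R²/t) I_d ≼ -∇² log(μ*γ_t)(z) ≼ (1/t) I_d`; in particular `μ*γ_t` is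
log-concave for `t ≥ R²`. -/
theorem bounded_support_log_hessian_bounds
    (d : ℕ) (R : ℝ) (hR : 0 < R)
    (μ : Measure (EuclideanSpace ℝ (Fin d))) [IsProbabilityMeasure μ]
    (hsupp : μ (Metric.closedBall 0 R)ᶜ = 0) :
    (∀ t : ℝ, 0 < t → ∀ z w : EuclideanSpace ℝ (Fin d),
      1 / t * (1 - R ^ 2 / t) * ‖w‖ ^ 2
          ≤ -(iteratedFDeriv ℝ 2 (fun y => Real.log (heatConvMeas μ t y)) z ![w, w])
        ∧ -(iteratedFDeriv ℝ 2 (fun y => Real.log (heatConvMeas μ t y)) z ![w, w])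
          ≤ 1 / t * ‖w‖ ^ 2)
    ∧ ∀ t : ℝ, R ^ 2 ≤ t →
        ConvexOn ℝ Set.univ (fun z => -Real.log (heatConvMeas μ t z)) := by
  constructor
  · intro t ht z w
    exact key hR hsupp ht z w
  · intro t ht'
    have ht : 0 < t := lt_of_lt_of_le (by positivity) ht'
    have hFpos : ∀ y, 0 < heatConvMeas μ t y := heat_pos hR.le hsupp ht
    have hg : ContDiff ℝ 2 (fun y => Real.log (heatConvMeas μ t y)) :=
      (heat_contDiff2 hsupp ht).log fun y => (hFpos y).ne'
    refine ⟨convex_univ, ?_⟩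
    intro x hx y hy a b ha hb hab
    set w := y - x with hw
    have hφ : ConvexOn ℝ Set.univ (fun s : ℝ => -Real.log (heatConvMeas μ t (x + s • w))) := by
      apply convexOn_of_hasDerivWithinAt2_nonneg convex_univ
        (f' := fun s => -(fderiv ℝ (fun y => Real.log (heatConvMeas μ t y)) (x + s • w) w))
        (f'' := fun s =>
          -(iteratedFDeriv ℝ 2 (fun y => Real.log (heatConvMeas μ t y)) (x + s • w) ![w, w]))
      · apply Continuous.continuousOn
        apply Continuous.neg
        apply (hg.continuous).comp
        exact continuous_const.add (continuous_id.smul continuous_const)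
      · intro s _
        exact ((hasDerivAt_line (hg.differentiable (by norm_num)) x w s).neg).hasDerivWithinAt
      · intro s _
        exact ((hasDerivAt_line2 hg x w s).neg).hasDerivWithinAt
      · intro s _
        have hk := (key hR hsupp ht (x + s • w) w).1
        have h0 : 0 ≤ 1 / t * (1 - R ^ 2 / t) * ‖w‖ ^ 2 := by
          apply mul_nonneg (mul_nonneg (by positivity) ?_) (sq_nonneg _)
          have h1 : R ^ 2 / t ≤ 1 := by
            rw [div_le_one ht]; exact ht'
          linarith
        linarith
    have h01 := hφ.2 (Set.mem_univ (0:ℝ)) (Set.mem_univ (1:ℝ)) ha hb hab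
    simp only [smul_eq_mul, mul_zero, mul_one, zero_add] at h01
    have e0 : x + (0:ℝ) • w = x := by simp
    have e1 : x + (1:ℝ) • w = y := by simp [hw]
    have eb : x + b • w = a • x + b • y := by
      have ha' : a = 1 - b := by linarith
      rw [hw, ha', smul_sub, sub_smul, one_smul]
      abel
    rw [e0, e1, eb] at h01
    simpa using h01
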